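/- Let n ≥ 6 and let G be a connected simple graph on n vertices having a Laplacian eigenvalue of multiplicity n − 3. Then G contains no induced subgraph isomorphic to J₂, the graph on five vertices v₁, v₂, v₃, v₄, u whose edges are exactly v₁v₂, v₂v₃, v₃v₄, uv₁, uv₂, uv₄ (a 5-cycle with exactly one chord). -/

import Mathlib

open Polynomial Matrix

/-- The graph `J₂` on five vertices `v₁, v₂, v₃, v₄, u` (labelled `0, 1, 2, 3, 4`),
whose edges are exactly `v₁v₂, v₂v₃, v₃v₄, uv₁, uv₂, uv₄`
(a 5-cycle with exactly one chord). -/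
def J2 : SimpleGraph (Fin 5) :=
  SimpleGraph.fromEdgeSet {s(0, 1), s(1, 2), s(2, 3), s(4, 0), s(4, 1), s(4, 3)}

lemma J2_adj (a b : Fin 5) : J2.Adj a b ↔
    ((a = 0 ∧ b = 1) ∨ (a = 1 ∧ b = 0) ∨ (a = 1 ∧ b = 2) ∨ (a = 2 ∧ b = 1) ∨
     (a = 2 ∧ b = 3) ∨ (a = 3 ∧ b = 2) ∨ (a = 4 ∧ b = 0) ∨ (a = 0 ∧ b = 4) ∨
     (a = 4 ∧ b = 1) ∨ (a = 1 ∧ b = 4) ∨ (a = 4 ∧ b = 3) ∨ (a = 3 ∧ b = 4)) := by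
  rw [J2, SimpleGraph.fromEdgeSet_adj]
  simp only [Set.mem_insert_iff, Set.mem_singleton_iff, Sym2.eq_iff]
  fin_cases a <;> fin_cases b <;> decide


lemma charpoly_diagonal {n : ℕ} (d : Fin n → ℝ) :
    (diagonal d).charpoly = ∏ i, (X - C (d i)) := by
  rw [Matrix.charpoly]
  have : charmatrix (diagonal d) = diagonal (fun i => (X : ℝ[X]) - C (d i)) := by
    ext i j
    by_cases h : i = j <;> simp [h, diagonal_apply_ne, charmatrix_apply_ne]
  rw [this, det_diagonal]

lemma charpoly_hermitian {n : ℕ} (A : Matrix (Fin n) (Fin n) ℝ) (hA : A.IsHermitian) :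
    A.charpoly = ∏ i, (X - C (hA.eigenvalues i)) := by
  set U := (Matrix.IsHermitian.eigenvectorUnitary hA : Matrix (Fin n) (Fin n) ℝ) with hUdef
  have hUV : U * star U = 1 :=
    (Matrix.mem_unitaryGroup_iff).mp (Matrix.IsHermitian.eigenvectorUnitary hA).2
  have hVU : star U * U = 1 :=
    (Matrix.mem_unitaryGroup_iff').mp (Matrix.IsHermitian.eigenvectorUnitary hA).2
  have hD : A = U * diagonal hA.eigenvalues * star U := by
    have := hA.spectral_theorem
    simpa using this
  have hmm : (C : ℝ →+* ℝ[X]).mapMatrix A =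
      (C : ℝ →+* ℝ[X]).mapMatrix U * (C : ℝ →+* ℝ[X]).mapMatrix (diagonal hA.eigenvalues)
        * (C : ℝ →+* ℝ[X]).mapMatrix (star U) := by
    conv_lhs => rw [hD]
    rw [_root_.map_mul, _root_.map_mul]
  have hcm : charmatrix A =
      (C : ℝ →+* ℝ[X]).mapMatrix U * charmatrix (diagonal hA.eigenvalues)
        * (C : ℝ →+* ℝ[X]).mapMatrix (star U) := by
    rw [charmatrix, charmatrix, mul_sub, sub_mul, hmm]
    congr 1
    rw [← (Matrix.scalar_commute (X : ℝ[X]) (fun r => Commute.all _ r)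
      ((C : ℝ →+* ℝ[X]).mapMatrix U)).eq, mul_assoc, ← _root_.map_mul ((C : ℝ →+* ℝ[X]).mapMatrix), hUV]
    simp
  rw [Matrix.charpoly, hcm, det_mul, det_mul, mul_comm, ← mul_assoc, ← det_mul,
    ← _root_.map_mul ((C : ℝ →+* ℝ[X]).mapMatrix), hVU]
  have : ((C : ℝ →+* ℝ[X]).mapMatrix (1 : Matrix (Fin n) (Fin n) ℝ)).det = 1 := by simp
  rw [this, one_mul]
  exact _root_.charpoly_diagonal _

lemma rootMultiplicity_pow' {p : ℝ[X]} (hp : p ≠ 0) (x : ℝ) (k : ℕ) :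
    (p ^ k).rootMultiplicity x = k * p.rootMultiplicity x := by
  induction k with
  | zero => simp
  | succ k ih =>
    rw [pow_succ, Polynomial.rootMultiplicity_mul (by simp [hp, pow_ne_zero]), ih]
    ring

lemma lapMatrix_map_rat {n : ℕ} (G : SimpleGraph (Fin n)) [DecidableRel G.Adj] :
    G.lapMatrix ℝ = (G.lapMatrix ℚ).map (algebraMap ℚ ℝ) := by
  ext i j
  simp only [SimpleGraph.lapMatrix, SimpleGraph.degMatrix, Matrix.map_apply, Matrix.sub_apply,
    Matrix.diagonal_apply, SimpleGraph.adjMatrix_apply]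
  push_cast
  split_ifs <;> simp

lemma lapMatrix_map_int {n : ℕ} (G : SimpleGraph (Fin n)) [DecidableRel G.Adj] :
    G.lapMatrix ℝ = (G.lapMatrix ℤ).map (algebraMap ℤ ℝ) := by
  ext i j
  simp only [SimpleGraph.lapMatrix, SimpleGraph.degMatrix, Matrix.map_apply, Matrix.sub_apply,
    Matrix.diagonal_apply, SimpleGraph.adjMatrix_apply]
  push_cast
  split_ifs <;> simp

lemma mu_is_int {n : ℕ} (hn : 6 ≤ n) (G : SimpleGraph (Fin n)) [DecidableRel G.Adj] (μ : ℝ)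
    (hmult : (G.lapMatrix ℝ).charpoly.rootMultiplicity μ = n - 3) :
    ∃ z : ℤ, μ = (z : ℝ) := by
  classical
  set φ := algebraMap ℚ ℝ with hφ
  set q := (G.lapMatrix ℚ).charpoly with hqdef
  have hq : (G.lapMatrix ℝ).charpoly = q.map φ := by
    rw [lapMatrix_map_rat, Matrix.charpoly_map]
  have hqmonic : q.Monic := Matrix.charpoly_monic _
  have hqdeg : q.natDegree = n := by
    rw [hqdef, Matrix.charpoly_natDegree_eq_dim, Fintype.card_fin]
  have hqapne : q.map φ ≠ 0 := (hqmonic.map φ).ne_zero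
  have hroot : (q.map φ).IsRoot μ := by
    rw [← Polynomial.rootMultiplicity_pos hqapne, ← hq, hmult]; omega
  have hint : IsIntegral ℚ μ :=
    ⟨q, hqmonic, by rwa [Polynomial.eval₂_eq_eval_map]⟩
  set m := minpoly ℚ μ with hm
  have hmirr := minpoly.irreducible hint
  have hmsep : m.Separable := hmirr.separable
  have hmmonic : m.Monic := minpoly.monic hint
  have hmmapne : m.map φ ≠ 0 := (hmmonic.map φ).ne_zero
  have hrm1 : (m.map φ).rootMultiplicity μ = 1 := by
    have hroot' : (m.map φ).IsRoot μ := by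
      rw [Polynomial.IsRoot, Polynomial.eval_map]
      have := minpoly.aeval ℚ μ
      rwa [Polynomial.aeval_def] at this
    have hle : (m.map φ).rootMultiplicity μ ≤ 1 := by
      by_contra hlt
      push_neg at hlt
      have hdvd := Polynomial.pow_rootMultiplicity_dvd (m.map φ) μ
      have h2 : (X - C μ) * (X - C μ) ∣ m.map φ := by
        refine dvd_trans ?_ hdvd
        rw [← pow_two]
        exact pow_dvd_pow _ hlt
      have := (hmsep.map).squarefree _ h2
      exact Polynomial.not_isUnit_X_sub_C μ this
    have hge : 0 < (m.map φ).rootMultiplicity μ :=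
      (Polynomial.rootMultiplicity_pos hmmapne).mpr hroot'
    omega
  -- m ^ (n-3) divides q
  have key : ∀ k, k ≤ n - 3 → m ^ k ∣ q := by
    intro k
    induction k with
    | zero => intro _; simp
    | succ k ih =>
      intro hk
      obtain ⟨r, hr⟩ := ih (by omega)
      have hrne : r ≠ 0 := by
        intro h; rw [h, mul_zero] at hr; exact hqmonic.ne_zero hr
      have hcount : (q.map φ).rootMultiplicity μ =
          k * ((m.map φ).rootMultiplicity μ) + (r.map φ).rootMultiplicity μ := by
        rw [hr, Polynomial.map_mul, Polynomial.map_pow,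
          Polynomial.rootMultiplicity_mul
            (mul_ne_zero (pow_ne_zero _ hmmapne) ((Polynomial.map_ne_zero_iff φ.injective).mpr hrne)),
          rootMultiplicity_pow' hmmapne]
      rw [← hq, hmult, hrm1, mul_one] at hcount
      have hrpos : 0 < (r.map φ).rootMultiplicity μ := by omega
      have hrroot : (r.map φ).IsRoot μ := by
        rw [← Polynomial.rootMultiplicity_pos ((Polynomial.map_ne_zero_iff φ.injective).mpr hrne)]
        exact hrpos
      have : m ∣ r := by
        apply minpoly.dvd ℚ μ
        rwa [Polynomial.aeval_def, Polynomial.eval₂_eq_eval_map]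
      obtain ⟨s, hs⟩ := this
      exact ⟨s, by rw [hr, hs, pow_succ]; ring⟩
  have hdvd : m ^ (n - 3) ∣ q := key (n-3) le_rfl
  have hdegle : (n - 3) * m.natDegree ≤ n := by
    have := Polynomial.natDegree_le_of_dvd hdvd hqmonic.ne_zero
    rwa [Polynomial.natDegree_pow, hqdeg] at this
  have hmdegpos : 0 < m.natDegree := minpoly.natDegree_pos hint
  -- m has degree 1
  have hmdeg1 : m.natDegree = 1 := by
    by_contra hne
    have h2d : 2 ≤ m.natDegree := by omega
    have hmul : (n - 3) * 2 ≤ n := le_trans (Nat.mul_le_mul (le_refl (n-3)) h2d) hdegle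
    have hn6 : n = 6 := by omega
    have hd2 : m.natDegree = 2 := by
      rw [hn6] at hdegle
      omega
    -- q = m ^ 3
    have h3 : m ^ 3 ∣ q := by rw [← show n - 3 = 3 by omega]; exact hdvd
    obtain ⟨c, hc⟩ := h3
    have hcne : c ≠ 0 := by intro h; rw [h, mul_zero] at hc; exact hqmonic.ne_zero hc
    have hdegc : c.natDegree = 0 := by
      have := congrArg Polynomial.natDegree hc
      rw [Polynomial.natDegree_mul (pow_ne_zero _ (hmmonic.ne_zero)) hcne,
        Polynomial.natDegree_pow, hqdeg, hd2, hn6] at this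
      omega
    have hcmonic : c.leadingCoeff = 1 := by
      have h := congrArg Polynomial.leadingCoeff hc
      rw [Polynomial.leadingCoeff_mul, Polynomial.leadingCoeff_pow, hmmonic.leadingCoeff,
        one_pow, one_mul, hqmonic.leadingCoeff] at h
      exact h.symm
    have hc1 : c = 1 := by
      rw [Polynomial.eq_C_of_natDegree_eq_zero hdegc]
      rw [Polynomial.leadingCoeff, hdegc] at hcmonic
      rw [hcmonic]; simp
    rw [hc1, mul_one] at hc
    -- q(0) = 0 since det L = 0
    have hdet : (G.lapMatrix ℚ).det = 0 := by
      rw [← Matrix.exists_mulVec_eq_zero_iff]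
      refine ⟨fun _ => 1, ?_, SimpleGraph.lapMatrix_mulVec_const_eq_zero G⟩
      intro h
      have h0 : (1:ℚ) = 0 := congrFun h ⟨0, by omega⟩
      norm_num at h0
    have hq0 : q.eval 0 = 0 := by
      rw [← Polynomial.coeff_zero_eq_eval_zero]
      have h := Matrix.det_eq_sign_charpoly_coeff (G.lapMatrix ℚ)
      rw [hdet] at h
      rcases mul_eq_zero.mp h.symm with h1 | h1
      · exfalso; revert h1; simp
      · exact h1
    have hm0 : m.eval 0 = 0 := by
      have := congrArg (Polynomial.eval 0) hc
      rw [Polynomial.eval_pow, hq0] at this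
      have := pow_eq_zero_iff (n := 3) (by norm_num) |>.mp this.symm
      exact this
    have hXdvd : X ∣ m := by
      rwa [Polynomial.X_dvd_iff, Polynomial.coeff_zero_eq_eval_zero]
    obtain ⟨t, ht⟩ := hXdvd
    rcases hmirr.isUnit_or_isUnit ht with hu | hu
    · exact Polynomial.not_isUnit_X hu
    · have ht0 : t.natDegree = 0 := Polynomial.natDegree_eq_zero_of_isUnit hu
      have htne : t ≠ 0 := by rintro rfl; rw [mul_zero] at ht; exact hmmonic.ne_zero ht
      have hdm := congrArg Polynomial.natDegree ht
      rw [Polynomial.natDegree_mul Polynomial.X_ne_zero htne,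
        Polynomial.natDegree_X, ht0, hd2] at hdm
      omega
  -- μ is rational
  have hmeq : m = X + C (m.coeff 0) := hmmonic.eq_X_add_C hmdeg1
  have hμrat : μ = φ (- m.coeff 0) := by
    have := minpoly.aeval ℚ μ
    rw [← hm, hmeq] at this
    simp only [map_add, Polynomial.aeval_X, Polynomial.aeval_C] at this
    have : μ = - φ (m.coeff 0) := by linarith [this]  -- might fail
    rw [this, map_neg]
  -- μ is an algebraic integer
  have hintZ : IsIntegral ℤ μ := by
    refine ⟨(G.lapMatrix ℤ).charpoly, Matrix.charpoly_monic _, ?_⟩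
    rw [Polynomial.eval₂_eq_eval_map, ← Matrix.charpoly_map, ← lapMatrix_map_int]
    have : ((G.lapMatrix ℝ).charpoly).IsRoot μ := by
      rw [← Polynomial.rootMultiplicity_pos (Matrix.charpoly_monic _).ne_zero, hmult]; omega
    exact this
  have hintZrat : IsIntegral ℤ (-m.coeff 0 : ℚ) := by
    rw [← isIntegral_algebraMap_iff (algebraMap ℚ ℝ).injective]
    rwa [← hμrat]
  obtain ⟨z, hz⟩ := IsIntegrallyClosed.isIntegral_iff.mp hintZrat
  refine ⟨z, ?_⟩
  rw [hμrat, ← hz]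
  simp

lemma exists_eigvec {n : ℕ} (hn : 6 ≤ n) (A : Matrix (Fin n) (Fin n) ℝ) (hA : A.IsHermitian)
    (μ : ℝ) (hmult : A.charpoly.rootMultiplicity μ = n - 3)
    (g : Fin 4 → Fin n) (hg : Function.Injective g) :
    ∃ x : Fin n → ℝ, x ≠ 0 ∧ (∀ v, v ∉ Set.range g → x v = 0) ∧ A *ᵥ x = μ • x := by
  classical
  -- the multiset of eigenvalues contains μ with multiplicity n-3
  have hcount : (Finset.univ.filter (fun i => μ = hA.eigenvalues i)).card = n - 3 := by
    have h1 : A.charpoly = ((Finset.univ.val.map hA.eigenvalues).map (fun a => X - C a)).prod := by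
      rw [charpoly_hermitian A hA, Finset.prod, Multiset.map_map]
      rfl
    have h2 := Polynomial.roots_multiset_prod_X_sub_C (Finset.univ.val.map hA.eigenvalues)
    have h3 : A.charpoly.roots = Finset.univ.val.map hA.eigenvalues := by rw [h1, h2]
    have h4 := Polynomial.count_roots (a := μ) A.charpoly
    rw [h3, Multiset.count_map, hmult] at h4
    rw [Finset.card_filter, Finset.sum_boole] at *
    rw [← h4]
    rfl
  set I := (Finset.univ.filter (fun i => μ = hA.eigenvalues i)) with hI
  -- linear independence of eigenvectors as plain functions
  have libig : LinearIndependent ℝ (fun j => ⇑(hA.eigenvectorBasis j) : Fin n → Fin n → ℝ) := by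
    have h := hA.eigenvectorBasis.toBasis.linearIndependent
    exact h.map' (WithLp.linearEquiv 2 ℝ (Fin n → ℝ)).toLinearMap
      (LinearEquiv.ker _)
  have li : LinearIndependent ℝ (fun j : {i // i ∈ I} => ⇑(hA.eigenvectorBasis j.1)) :=
    libig.comp Subtype.val Subtype.val_injective
  set W := Module.End.eigenspace (Matrix.mulVecLin A) μ with hW
  have hle : Submodule.span ℝ (Set.range (fun j : {i // i ∈ I} => ⇑(hA.eigenvectorBasis j.1))) ≤ W := by
    rw [Submodule.span_le]
    rintro - ⟨j, rfl⟩
    rw [SetLike.mem_coe, hW, Module.End.mem_eigenspace_iff]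
    have h1 := hA.mulVec_eigenvectorBasis j.1
    have h2 : μ = hA.eigenvalues j.1 := (Finset.mem_filter.mp j.2).2
    rw [Matrix.mulVecLin_apply, h1, h2]
  have hWrank : n - 3 ≤ Module.finrank ℝ W := by
    have := Submodule.finrank_mono hle
    rwa [finrank_span_eq_card li, Fintype.card_coe, hcount] at this
  -- the coordinate subspace
  set U := Submodule.span ℝ (Set.range (fun i : Fin 4 => Pi.basisFun ℝ (Fin n) (g i))) with hU
  have liU : LinearIndependent ℝ (fun i : Fin 4 => Pi.basisFun ℝ (Fin n) (g i)) :=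
    (Pi.basisFun ℝ (Fin n)).linearIndependent.comp g hg
  have hUrank : Module.finrank ℝ U = 4 := by
    rw [hU, finrank_span_eq_card liU, Fintype.card_fin]
  have hUsupp : ∀ x ∈ U, ∀ v, v ∉ Set.range g → x v = 0 := by
    intro x hx
    induction hx using Submodule.span_induction with
    | mem y hy =>
      obtain ⟨i, rfl⟩ := hy
      intro v hv
      have : g i ≠ v := fun h => hv ⟨i, h⟩
      simp [Pi.basisFun_apply, Pi.single_apply, if_neg this]
      exact fun h => this h.symm
    | zero => intro v _; rfl
    | add y z _ _ hy hz => intro v hv; simp [hy v hv, hz v hv]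
    | smul c y _ hy => intro v hv; simp [hy v hv]
  -- dimension count
  have hsum := Submodule.finrank_sup_add_finrank_inf_eq W U
  have htop : Module.finrank ℝ (W ⊔ U : Submodule ℝ (Fin n → ℝ)) ≤ n := by
    have := Submodule.finrank_le (W ⊔ U : Submodule ℝ (Fin n → ℝ))
    rwa [Module.finrank_pi, Fintype.card_fin] at this
  have hpos : 0 < Module.finrank ℝ (W ⊓ U : Submodule ℝ (Fin n → ℝ)) := by omega
  have : Nontrivial (W ⊓ U : Submodule ℝ (Fin n → ℝ)) := Module.nontrivial_of_finrank_pos hpos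
  obtain ⟨⟨x, hxmem⟩, hxne⟩ := exists_ne (0 : (W ⊓ U : Submodule ℝ (Fin n → ℝ)))
  refine ⟨x, ?_, fun v hv => hUsupp x hxmem.2 v hv, ?_⟩
  · intro h; apply hxne; ext; simp [h]
  · have h := Module.End.mem_eigenspace_iff.mp hxmem.1
    rwa [Matrix.mulVecLin_apply] at h


set_option maxHeartbeats 2000000 in
theorem aux_no_J2
    (n : ℕ) (hn : 6 ≤ n)
    (G : SimpleGraph (Fin n)) [DecidableRel G.Adj]
    (z : ℤ)
    (hmult : ((G.lapMatrix ℝ).charpoly.rootMultiplicity (z:ℝ)) = n - 3)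
    (f : Fin 5 → Fin n) (hf : Function.Injective f)
    (hadj : ∀ i j, G.Adj (f i) (f j) ↔ J2.Adj i j) : False := by
  classical
  have hherm : (G.lapMatrix ℝ).IsHermitian := by
    rw [Matrix.IsHermitian, Matrix.conjTranspose_eq_transpose_of_trivial]
    exact G.isSymm_lapMatrix (R := ℝ)
  set g : Fin 4 → Fin n := fun i => f (Fin.castLE (by norm_num) i) with hgdef
  have hg : Function.Injective g := by
    intro i j h
    have := hf h
    exact Fin.castLE_injective _ this
  obtain ⟨x, hxne, hxsupp, hxeig⟩ := exists_eigvec hn _ hherm (z:ℝ) hmult g hg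
  -- range g as f-images
  have hrange : ∀ i : Fin 4, g i = f (Fin.castLE (by norm_num) i) := fun _ => rfl
  have hnotin : ∀ v : Fin n, v ∉ Set.range f → v ∉ Set.range g := by
    rintro v hv ⟨i, rfl⟩; exact hv ⟨_, rfl⟩
  have hxf4 : x (f 4) = 0 := by
    apply hxsupp
    rintro ⟨i, hi⟩
    have := hf hi
    have h2 : (Fin.castLE (by norm_num : 4 ≤ 5) i : Fin 5) ≠ 4 := by
      intro h; have := congrArg Fin.val h; simp [Fin.castLE] at this; omega
    exact h2 this
  -- neighbor sum formula
  have hsum : ∀ v : Fin n, ∑ u ∈ G.neighborFinset v, x u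
      = ∑ i : Fin 4, (if G.Adj v (g i) then x (g i) else 0) := by
    intro v
    rw [← Finset.sum_filter_add_sum_filter_not (G.neighborFinset v)
      (fun u => u ∈ Finset.image g Finset.univ)]
    have h2 : ∑ u ∈ (G.neighborFinset v).filter (fun u => u ∉ Finset.image g Finset.univ), x u
        = 0 := by
      apply Finset.sum_eq_zero
      intro u hu
      rw [Finset.mem_filter] at hu
      apply hxsupp
      intro ⟨i, hi⟩
      exact hu.2 (Finset.mem_image.mpr ⟨i, Finset.mem_univ i, hi⟩)
    rw [h2, add_zero]
    have h3 : (G.neighborFinset v).filter (fun u => u ∈ Finset.image g Finset.univ)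
        = (Finset.univ.filter (fun i : Fin 4 => G.Adj v (g i))).image g := by
      ext u
      simp only [Finset.mem_filter, Finset.mem_image, SimpleGraph.mem_neighborFinset,
        Finset.mem_univ, true_and]
      constructor
      · rintro ⟨hadj', i, _, rfl⟩; exact ⟨i, hadj', rfl⟩
      · rintro ⟨i, hadj', rfl⟩; exact ⟨hadj', i, rfl⟩
    rw [h3, Finset.sum_image (fun a _ b _ h => hg h), Finset.sum_filter]
  -- master equation
  have heq : ∀ j : Fin 5, (G.degree (f j) : ℝ) * x (f j)
      - ((if J2.Adj j 0 then x (f 0) else 0) + (if J2.Adj j 1 then x (f 1) else 0)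
        + (if J2.Adj j 2 then x (f 2) else 0) + (if J2.Adj j 3 then x (f 3) else 0))
      = (z:ℝ) * x (f j) := by
    intro j
    have h1 := congrFun hxeig (f j)
    rw [SimpleGraph.lapMatrix_mulVec_apply, hsum] at h1
    rw [Fin.sum_univ_four] at h1
    have e0 : g 0 = f 0 := rfl
    have e1 : g 1 = f 1 := rfl
    have e2 : g 2 = f 2 := rfl
    have e3 : g 3 = f 3 := rfl
    rw [e0, e1, e2, e3] at h1
    simp only [hadj] at h1
    rw [Pi.smul_apply, smul_eq_mul] at h1
    exact h1
  have E0 := heq 0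
  have E1 := heq 1
  have E2 := heq 2
  have E3 := heq 3
  have E4 := heq 4
  simp (config := { decide := true }) only [J2_adj, if_true, if_false] at E0 E1 E2 E3 E4
  rw [hxf4] at E4
  norm_num at E0 E1 E2 E3 E4
  -- x (f 0) ≠ 0
  have hx0 : x (f 0) ≠ 0 := by
    intro h0
    have h1 : x (f 1) = 0 := by rw [h0] at E0; linarith
    have h2 : x (f 2) = 0 := by rw [h0, h1] at E1; linarith
    have h3 : x (f 3) = 0 := by rw [h1, h2] at E2; linarith
    apply hxne
    funext v
    by_cases hv : v ∈ Set.range g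
    · obtain ⟨i, rfl⟩ := hv
      fin_cases i
      · exact h0
      · exact h1
      · exact h2
      · exact h3
    · exact hxsupp v hv
  -- integer parameters
  set b0 : ℤ := (G.degree (f 0) : ℤ) - z with hb0
  set b1 : ℤ := (G.degree (f 1) : ℤ) - z with hb1
  set b2 : ℤ := (G.degree (f 2) : ℤ) - z with hb2
  set b3 : ℤ := (G.degree (f 3) : ℤ) - z with hb3
  have cb0 : ((b0 : ℤ) : ℝ) = (G.degree (f 0) : ℝ) - (z : ℝ) := by push_cast [hb0]; ring
  have cb1 : ((b1 : ℤ) : ℝ) = (G.degree (f 1) : ℝ) - (z : ℝ) := by push_cast [hb1]; ring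
  have cb2 : ((b2 : ℤ) : ℝ) = (G.degree (f 2) : ℝ) - (z : ℝ) := by push_cast [hb2]; ring
  have cb3 : ((b3 : ℤ) : ℝ) = (G.degree (f 3) : ℝ) - (z : ℝ) := by push_cast [hb3]; ring
  have hx1 : x (f 1) = (b0 : ℝ) * x (f 0) := by rw [cb0]; linarith
  have hx2 : x (f 2) = ((b0 * b1 - 1 : ℤ) : ℝ) * x (f 0) := by
    have : (b1:ℝ) * x (f 1) = x (f 0) + x (f 2) := by rw [cb1]; linarith
    rw [hx1] at this
    push_cast
    linarith
  have hx3 : x (f 3) = ((-(1 + b0) : ℤ) : ℝ) * x (f 0) := by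
    rw [hx1] at E4
    push_cast
    linarith
  have P1 : b2 * (b0 * b1 - 1) = -1 := by
    have hr : (b2:ℝ) * x (f 2) = x (f 1) + x (f 3) := by rw [cb2]; linarith
    rw [hx1, hx2, hx3] at hr
    have hr2 : ((b2 * (b0 * b1 - 1) : ℤ) : ℝ) * x (f 0) = ((-1 : ℤ):ℝ) * x (f 0) := by
      push_cast at hr ⊢
      ring_nf at hr ⊢
      linarith
    have := mul_right_cancel₀ hx0 hr2
    exact_mod_cast this
  have P2 : b3 * (1 + b0) = -(b0 * b1 - 1) := by
    have hr : (b3:ℝ) * x (f 3) = x (f 2) := by rw [cb3]; linarith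
    rw [hx2, hx3] at hr
    have hr2 : ((b3 * (1 + b0) : ℤ) : ℝ) * x (f 0) = ((-(b0 * b1 - 1) : ℤ):ℝ) * x (f 0) := by
      push_cast at hr ⊢
      ring_nf at hr ⊢
      linarith
    have := mul_right_cancel₀ hx0 hr2
    exact_mod_cast this
  -- case analysis on c = b0*b1 - 1
  have hcunit : b0 * b1 - 1 = 1 ∨ b0 * b1 - 1 = -1 := by
    have hu : IsUnit (b0 * b1 - 1) :=
      IsUnit.of_mul_eq_one (a := b0 * b1 - 1) (-b2) (by linarith [P1])
    exact Int.isUnit_iff.mp hu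
  have hvals : (b0 = -2 ∧ b1 = -1 ∧ b2 = -1 ∧ b3 = 1) ∨
      (b0 = 0 ∧ b2 = 1 ∧ b3 = 1) ∨
      (b0 = -2 ∧ b1 = 0 ∧ b2 = 1 ∧ b3 = -1) := by
    rcases hcunit with h | h
    · -- c = 1
      left
      rw [h] at P2
      have hbunit : 1 + b0 = 1 ∨ 1 + b0 = -1 :=
        Int.isUnit_iff.mp (IsUnit.of_mul_eq_one (a := 1 + b0) (-b3) (by linear_combination -P2))
      have hb0' : b0 = -2 := by
        rcases hbunit with h1 | h1
        · exfalso
          have hb00 : b0 = 0 := by omega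
          rw [hb00] at h
          norm_num at h
        · omega
      have hmul : b0 * b1 = 2 := by omega
      rw [hb0'] at hmul
      have hb1' : b1 = -1 := by omega
      have hb2' : b2 = -1 := by rw [h] at P1; omega
      have hb3' : b3 = 1 := by rw [hb0'] at P2; norm_num at P2; omega
      exact ⟨hb0', hb1', hb2', hb3'⟩
    · -- c = -1
      right
      rw [h] at P2
      norm_num at P2
      have hb2' : b2 = 1 := by rw [h] at P1; omega
      have hbunit : 1 + b0 = 1 ∨ 1 + b0 = -1 :=
        Int.isUnit_iff.mp (IsUnit.of_mul_eq_one (a := 1 + b0) b3 (by linear_combination P2))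
      rcases hbunit with h1 | h1
      · have hb0' : b0 = 0 := by omega
        have hb3' : b3 = 1 := by rw [hb0'] at P2; norm_num at P2; omega
        exact Or.inl ⟨hb0', hb2', hb3'⟩
      · have hb0' : b0 = -2 := by omega
        have hmul : b0 * b1 = 0 := by omega
        rw [hb0'] at hmul
        have hb1' : b1 = 0 := by omega
        have hb3' : b3 = -1 := by rw [hb0'] at P2; norm_num at P2; omega
        exact Or.inr ⟨hb0', hb1', hb2', hb3'⟩
  -- outside vertices
  set O : Finset (Fin n) := Finset.univ.filter (fun w => ∀ j : Fin 5, w ≠ f j) with hO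
  set a : Fin 5 → ℕ := fun i => (O.filter (fun w => G.Adj w (f i))).card with ha
  -- degree decomposition
  have hdeg : ∀ i : Fin 5, G.degree (f i)
      = (Finset.univ.filter (fun j : Fin 5 => J2.Adj i j)).card + a i := by
    intro i
    rw [SimpleGraph.degree, SimpleGraph.neighborFinset_eq_filter]
    rw [← Finset.card_filter_add_card_filter_not
      (p := fun u => ∃ j : Fin 5, u = f j) (s := Finset.univ.filter (fun u => G.Adj (f i) u))]
    congr 1
    · have himg : (Finset.univ.filter (fun u => G.Adj (f i) u)).filter
          (fun u => ∃ j : Fin 5, u = f j)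
          = (Finset.univ.filter (fun j : Fin 5 => J2.Adj i j)).image f := by
        ext u
        simp only [Finset.mem_filter, Finset.mem_univ, true_and, Finset.mem_image]
        constructor
        · rintro ⟨hu, j, rfl⟩
          exact ⟨j, (hadj i j).mp hu, rfl⟩
        · rintro ⟨j, hj, rfl⟩
          exact ⟨(hadj i j).mpr hj, j, rfl⟩
      rw [himg, Finset.card_image_of_injective _ hf]
    · rw [ha, hO]
      congr 1
      ext u
      simp only [Finset.mem_filter, Finset.mem_univ, true_and]
      rw [G.adj_comm]
      constructor
      · rintro ⟨hu, hnex⟩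
        exact ⟨fun j hj => hnex ⟨j, hj⟩, hu⟩
      · rintro ⟨hall, hu⟩
        exact ⟨hu, fun ⟨j, hj⟩ => hall j hj⟩
  -- J2 degrees
  have hd0 : (Finset.univ.filter (fun j : Fin 5 => J2.Adj 0 j)).card = 2 := by
    have : Finset.univ.filter (fun j : Fin 5 => J2.Adj 0 j) = ({1, 4} : Finset (Fin 5)) := by
      ext j
      simp only [Finset.mem_filter, Finset.mem_univ, true_and, J2_adj,
        Finset.mem_insert, Finset.mem_singleton]
      fin_cases j <;> decide
    rw [this]; decide
  have hd1 : (Finset.univ.filter (fun j : Fin 5 => J2.Adj 1 j)).card = 3 := by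
    have : Finset.univ.filter (fun j : Fin 5 => J2.Adj 1 j) = ({0, 2, 4} : Finset (Fin 5)) := by
      ext j
      simp only [Finset.mem_filter, Finset.mem_univ, true_and, J2_adj,
        Finset.mem_insert, Finset.mem_singleton]
      fin_cases j <;> decide
    rw [this]; decide
  have hd2 : (Finset.univ.filter (fun j : Fin 5 => J2.Adj 2 j)).card = 2 := by
    have : Finset.univ.filter (fun j : Fin 5 => J2.Adj 2 j) = ({1, 3} : Finset (Fin 5)) := by
      ext j
      simp only [Finset.mem_filter, Finset.mem_univ, true_and, J2_adj,
        Finset.mem_insert, Finset.mem_singleton]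
      fin_cases j <;> decide
    rw [this]; decide
  have hd3 : (Finset.univ.filter (fun j : Fin 5 => J2.Adj 3 j)).card = 2 := by
    have : Finset.univ.filter (fun j : Fin 5 => J2.Adj 3 j) = ({2, 4} : Finset (Fin 5)) := by
      ext j
      simp only [Finset.mem_filter, Finset.mem_univ, true_and, J2_adj,
        Finset.mem_insert, Finset.mem_singleton]
      fin_cases j <;> decide
    rw [this]; decide
  have hZ0 : (a 0 : ℤ) = z + b0 - 2 := by
    have h := hdeg 0; rw [hd0] at h; omega
  have hZ1 : (a 1 : ℤ) = z + b1 - 3 := by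
    have h := hdeg 1; rw [hd1] at h; omega
  have hZ2 : (a 2 : ℤ) = z + b2 - 2 := by
    have h := hdeg 2; rw [hd2] at h; omega
  have hZ3 : (a 3 : ℤ) = z + b3 - 2 := by
    have h := hdeg 3; rw [hd3] at h; omega
  -- per-outside-vertex equation
  have hweq : ∀ w ∈ O, (((if G.Adj w (f 0) then x (f 0) else 0)
      + if G.Adj w (f 1) then x (f 1) else 0)
      + if G.Adj w (f 2) then x (f 2) else 0)
      + (if G.Adj w (f 3) then x (f 3) else 0) = 0 := by
    intro w hw
    have hwnr : w ∉ Set.range f := by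
      rw [hO, Finset.mem_filter] at hw
      rintro ⟨j, rfl⟩
      exact hw.2 j rfl
    have hxw : x w = 0 := hxsupp w (hnotin w hwnr)
    have h1 := congrFun hxeig w
    rw [SimpleGraph.lapMatrix_mulVec_apply, hsum, Fin.sum_univ_four] at h1
    have e0 : g 0 = f 0 := rfl
    have e1 : g 1 = f 1 := rfl
    have e2 : g 2 = f 2 := rfl
    have e3 : g 3 = f 3 := rfl
    rw [e0, e1, e2, e3, Pi.smul_apply, smul_eq_mul, hxw] at h1
    linarith
  -- three cases
  rcases hvals with ⟨v0, v1, v2, v3⟩ | ⟨v0, v2, v3⟩ | ⟨v0, v1, v2, v3⟩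
  · -- CASE A
    rw [v0] at hx1
    rw [v0, v1] at hx2
    rw [v0] at hx3
    norm_num at hx1 hx2 hx3
    have hsub : ∀ w ∈ O, G.Adj w (f 2) → G.Adj w (f 1) := by
      intro w hw h2a
      by_contra h1a
      have h := hweq w hw
      rw [hx1, hx2, hx3] at h
      by_cases h0a : G.Adj w (f 0) <;> by_cases h3a : G.Adj w (f 3) <;>
        simp only [h0a, h1a, h2a, h3a, if_true, if_false] at h <;>
        · apply hx0; linarith
    have hle : a 2 ≤ a 1 := by
      apply Finset.card_le_card
      intro w hw
      rw [Finset.mem_filter] at hw ⊢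
      exact ⟨hw.1, hsub w hw.1 hw.2⟩
    have hle' : (a 2 : ℤ) ≤ (a 1 : ℤ) := by exact_mod_cast hle
    omega
  · -- CASE B
    rw [v0] at hx1
    rw [v0] at hx2
    rw [v0] at hx3
    norm_num at hx1 hx2 hx3
    have hswB : ∀ w ∈ O, (if G.Adj w (f 0) then (1:ℕ) else 0)
        = (if G.Adj w (f 2) then 1 else 0) + (if G.Adj w (f 3) then 1 else 0) := by
      intro w hw
      have h := hweq w hw
      rw [hx1, hx2, hx3] at h
      by_cases h0a : G.Adj w (f 0) <;> by_cases h2a : G.Adj w (f 2) <;>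
        by_cases h3a : G.Adj w (f 3) <;>
        simp only [h0a, h2a, h3a, if_true, if_false, ite_self] at h ⊢ <;>
        first
          | (exfalso; apply hx0; linarith)
          | norm_num
    have hcards : a 0 = a 2 + a 3 := by
      rw [ha]
      simp only
      rw [Finset.card_filter, Finset.card_filter, Finset.card_filter]
      rw [← Finset.sum_add_distrib]
      exact Finset.sum_congr rfl hswB
    omega
  · -- CASE C
    rw [v0] at hx1
    rw [v0, v1] at hx2
    rw [v0] at hx3
    norm_num at hx1 hx2 hx3
    have hsub : ∀ w ∈ O, G.Adj w (f 1) → G.Adj w (f 0) := by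
      intro w hw h1a
      by_contra h0a
      have h := hweq w hw
      rw [hx1, hx2, hx3] at h
      by_cases h2a : G.Adj w (f 2) <;> by_cases h3a : G.Adj w (f 3) <;>
        simp only [h0a, h1a, h2a, h3a, if_true, if_false] at h <;>
        · apply hx0; linarith
    have hle : a 1 ≤ a 0 := by
      apply Finset.card_le_card
      intro w hw
      rw [Finset.mem_filter] at hw ⊢
      exact ⟨hw.1, hsub w hw.1 hw.2⟩
    have hle' : (a 1 : ℤ) ≤ (a 0 : ℤ) := by exact_mod_cast hle
    omega


/-- Let `n ≥ 6` and let `G` be a connected simple graph on `n` vertices having a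
Laplacian eigenvalue of multiplicity `n − 3`. Then `G` contains no induced subgraph
isomorphic to `J₂`. -/
theorem no_induced_J2_of_laplacian_multiplicity
    (n : ℕ) (hn : 6 ≤ n)
    (G : SimpleGraph (Fin n)) [DecidableRel G.Adj] (hconn : G.Connected)
    (hmult : ∃ α : ℝ, ((G.lapMatrix ℝ).charpoly.rootMultiplicity α) = n - 3) :
    ¬ ∃ f : Fin 5 → Fin n, Function.Injective f ∧
        ∀ i j, G.Adj (f i) (f j) ↔ J2.Adj i j := by
  rintro ⟨f, hf, hadj⟩
  obtain ⟨μ, hmult⟩ := hmult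
  obtain ⟨z, rfl⟩ := mu_is_int hn G μ hmult
  exact aux_no_J2 n hn G z hmult f hf hadj
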